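/- The Shapley, Banzhaf, and TPM GCMs do not satisfy Scheduling Monotonicity: there exist a makespan function v satisfying (S1)–(S4), a finite set T of transactions, and transactions tx3, tx4 not in T with v(T∪{tx3}) < v(T∪{tx4}), but gas_{T∪{tx3}}(tx3) > gas_{T∪{tx4}}(tx4) for each of the three mechanisms. In particular, for T = {tx1, tx2} with tx1 ≃ (1,{k1}), tx2 ≃ (3,{k2}), tx3 ≃ (2,{k1}), tx4 ≃ (1,{k2}) and v the optimal-scheduler makespan on at least 2 threads, one has v(T∪{tx3}) = 3 < 4 = v(T∪{tx4}), yet the Shapley values are 1 > 5/6, the Banzhaf values are 1 > 3/4, and the TPM values are 1 > 4/5. -/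

import Mathlib

/-- The Shapley GCM. -/
noncomputable def shapleyGas {Tx : Type} [DecidableEq Tx]
    (v : Finset Tx → ℝ) (T : Finset Tx) (tx : Tx) : ℝ :=
  ∑ S ∈ (T.erase tx).powerset,
    ((S.card.factorial * (T.card - S.card - 1).factorial : ℝ) / (T.card.factorial : ℝ))
      * (v (insert tx S) - v S)

/-- The Banzhaf GCM. -/
noncomputable def banzhafGas {Tx : Type} [DecidableEq Tx]
    (v : Finset Tx → ℝ) (T : Finset Tx) (tx : Tx) : ℝ :=
  (1 / 2 ^ (T.card - 1)) * ∑ S ∈ (T.erase tx).powerset, (v (insert tx S) - v S)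

/-- The Time-Proportional Makespan (TPM) GCM. -/
noncomputable def tpmGas {Tx : Type} [DecidableEq Tx]
    (t : Tx → ℝ) (v : Finset Tx → ℝ) (T : Finset Tx) (tx : Tx) : ℝ :=
  (t tx / ∑ tx' ∈ T, t tx') * v T

/-- Execution times of `tx1 ≃ (1,{k1})`, `tx2 ≃ (3,{k2})`, `tx3 ≃ (2,{k1})`,
`tx4 ≃ (1,{k2})` (indices `0,1,2,3`). -/
noncomputable def tTx7 : Fin 4 → ℝ := ![1, 3, 2, 1]

/-- Storage key sets (keys `k1 = 0`, `k2 = 1`). -/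
def keysTx7 : Fin 4 → Finset (Fin 2) := ![{0}, {1}, {0}, {1}]


set_option linter.unusedTactic false

/-- Weights of key-0 transactions (`tx1` time 1, `tx3` time 2). -/
noncomputable def w0 : Fin 4 → ℝ := ![1, 0, 2, 0]
/-- Weights of key-1 transactions (`tx2` time 3, `tx4` time 1). -/
noncomputable def w1 : Fin 4 → ℝ := ![0, 3, 0, 1]

/-- Optimal-scheduler makespan on ≥ 2 threads: the larger of the total times
of the key-0 and key-1 transactions. -/
noncomputable def vOpt (S : Finset (Fin 4)) : ℝ :=
  max (∑ i ∈ S, w0 i) (∑ i ∈ S, w1 i)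

lemma sum_eval (w : Fin 4 → ℝ) (S : Finset (Fin 4)) :
    ∑ i ∈ S, w i = (if (0:Fin 4) ∈ S then w 0 else 0) + (if (1:Fin 4) ∈ S then w 1 else 0)
      + (if (2:Fin 4) ∈ S then w 2 else 0) + (if (3:Fin 4) ∈ S then w 3 else 0) := by
  have : ∑ i ∈ S, w i = ∑ i ∈ Finset.univ, if i ∈ S then w i else 0 := by
    rw [Finset.sum_ite_mem, Finset.univ_inter]
  rw [this, Fin.sum_univ_four]

lemma vOpt_eval (S : Finset (Fin 4)) :
    vOpt S = max ((if (0:Fin 4) ∈ S then (1:ℝ) else 0) + (if (2:Fin 4) ∈ S then 2 else 0))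
      ((if (1:Fin 4) ∈ S then (3:ℝ) else 0) + (if (3:Fin 4) ∈ S then 1 else 0)) := by
  unfold vOpt
  rw [sum_eval, sum_eval]
  show max _ _ = _
  norm_num [w0, w1, Matrix.cons_val_two, Matrix.cons_val_three, Matrix.vecHead, Matrix.vecTail]

lemma w0_nonneg : ∀ i, 0 ≤ w0 i := by intro i; fin_cases i <;> norm_num [w0]
lemma w1_nonneg : ∀ i, 0 ≤ w1 i := by intro i; fin_cases i <;> norm_num [w1]

lemma vOpt_mono {A B : Finset (Fin 4)} (h : A ⊆ B) : vOpt A ≤ vOpt B := by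
  unfold vOpt
  exact max_le_max
    (Finset.sum_le_sum_of_subset_of_nonneg h (fun i _ _ => w0_nonneg i))
    (Finset.sum_le_sum_of_subset_of_nonneg h (fun i _ _ => w1_nonneg i))

lemma vOpt_insert_le {T : Finset (Fin 4)} {a b : Fin 4} (ha : a ∉ T) (hb : b ∉ T)
    (h0 : w0 a ≤ w0 b) (h1 : w1 a ≤ w1 b) : vOpt (insert a T) ≤ vOpt (insert b T) := by
  unfold vOpt
  rw [Finset.sum_insert ha, Finset.sum_insert hb, Finset.sum_insert ha, Finset.sum_insert hb]
  exact max_le_max (by linarith) (by linarith)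

lemma vOpt_S2 : ∀ (T : Finset (Fin 4)) (a b c : Fin 4), a ∉ T → b ∉ T → c ∉ T → a ≠ b →
    tTx7 c = tTx7 a + tTx7 b → keysTx7 c = keysTx7 a ∪ keysTx7 b →
    vOpt (insert a (insert b T)) ≤ vOpt (insert c T) := by
  intro T a b c ha hb hc hab ht hkeys
  fin_cases a <;> fin_cases b <;> fin_cases c <;>
    first
      | exact absurd rfl hab
      | exact absurd hkeys (by decide)
      | (exfalso; revert ht; norm_num [tTx7]; done)

lemma vOpt_S3 : ∀ (T : Finset (Fin 4)) (a b : Fin 4), a ∉ T → b ∉ T →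
    tTx7 a ≤ tTx7 b → keysTx7 a ⊆ keysTx7 b →
    vOpt (insert a T) ≤ vOpt (insert b T) := by
  intro T a b ha hb ht hk
  fin_cases a <;> fin_cases b <;>
    first
      | (apply vOpt_insert_le ha hb <;> (norm_num [w0, w1]; done))
      | (exfalso; revert hk; decide)
      | (exfalso; revert ht; norm_num [tTx7]; done)

lemma vOpt_T3 : vOpt (insert 2 ({0, 1} : Finset (Fin 4))) = 3 := by
  rw [vOpt_eval]
  simp (config := { decide := true }) only [Finset.mem_insert, Finset.mem_singleton]
  norm_num

lemma vOpt_T4 : vOpt (insert 3 ({0, 1} : Finset (Fin 4))) = 4 := by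
  rw [vOpt_eval]
  simp (config := { decide := true }) only [Finset.mem_insert, Finset.mem_singleton]
  norm_num

lemma shapley3 : shapleyGas vOpt (insert 2 ({0, 1} : Finset (Fin 4))) 2 = 1 := by
  unfold shapleyGas
  rw [show (insert 2 ({0, 1} : Finset (Fin 4))).erase 2 = {0,1} from by decide,
      show (insert 2 ({0, 1} : Finset (Fin 4))).card = 3 from by decide,
      show ({0,1} : Finset (Fin 4)).powerset = {∅, {0}, {1}, {0,1}} from by decide,
      Finset.sum_insert (by decide), Finset.sum_insert (by decide),
      Finset.sum_insert (by decide), Finset.sum_singleton]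
  simp only [vOpt_eval]
  simp (config := { decide := true }) only [Finset.mem_insert, Finset.mem_singleton,
    Finset.notMem_empty, Finset.card_empty, Finset.card_singleton,
    show ({0,1} : Finset (Fin 4)).card = 2 from by decide]
  norm_num [Nat.factorial]

lemma shapley4 : shapleyGas vOpt (insert 3 ({0, 1} : Finset (Fin 4))) 3 = 5 / 6 := by
  unfold shapleyGas
  rw [show (insert 3 ({0, 1} : Finset (Fin 4))).erase 3 = {0,1} from by decide,
      show (insert 3 ({0, 1} : Finset (Fin 4))).card = 3 from by decide,
      show ({0,1} : Finset (Fin 4)).powerset = {∅, {0}, {1}, {0,1}} from by decide,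
      Finset.sum_insert (by decide), Finset.sum_insert (by decide),
      Finset.sum_insert (by decide), Finset.sum_singleton]
  simp only [vOpt_eval]
  simp (config := { decide := true }) only [Finset.mem_insert, Finset.mem_singleton,
    Finset.notMem_empty, Finset.card_empty, Finset.card_singleton,
    show ({0,1} : Finset (Fin 4)).card = 2 from by decide]
  norm_num [Nat.factorial]

lemma banzhaf3 : banzhafGas vOpt (insert 2 ({0, 1} : Finset (Fin 4))) 2 = 1 := by
  unfold banzhafGas
  rw [show (insert 2 ({0, 1} : Finset (Fin 4))).erase 2 = {0,1} from by decide,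
      show (insert 2 ({0, 1} : Finset (Fin 4))).card = 3 from by decide,
      show ({0,1} : Finset (Fin 4)).powerset = {∅, {0}, {1}, {0,1}} from by decide,
      Finset.sum_insert (by decide), Finset.sum_insert (by decide),
      Finset.sum_insert (by decide), Finset.sum_singleton]
  simp only [vOpt_eval]
  simp (config := { decide := true }) only [Finset.mem_insert, Finset.mem_singleton,
    Finset.notMem_empty]
  norm_num

lemma banzhaf4 : banzhafGas vOpt (insert 3 ({0, 1} : Finset (Fin 4))) 3 = 3 / 4 := by
  unfold banzhafGas
  rw [show (insert 3 ({0, 1} : Finset (Fin 4))).erase 3 = {0,1} from by decide,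
      show (insert 3 ({0, 1} : Finset (Fin 4))).card = 3 from by decide,
      show ({0,1} : Finset (Fin 4)).powerset = {∅, {0}, {1}, {0,1}} from by decide,
      Finset.sum_insert (by decide), Finset.sum_insert (by decide),
      Finset.sum_insert (by decide), Finset.sum_singleton]
  simp only [vOpt_eval]
  simp (config := { decide := true }) only [Finset.mem_insert, Finset.mem_singleton,
    Finset.notMem_empty]
  norm_num

lemma tpm3 : tpmGas tTx7 vOpt (insert 2 ({0, 1} : Finset (Fin 4))) 2 = 1 := by
  unfold tpmGas
  rw [vOpt_T3, sum_eval]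
  simp (config := { decide := true }) only [Finset.mem_insert, Finset.mem_singleton]
  norm_num [tTx7, Matrix.cons_val_two, Matrix.cons_val_three, Matrix.vecHead, Matrix.vecTail]

lemma tpm4 : tpmGas tTx7 vOpt (insert 3 ({0, 1} : Finset (Fin 4))) 3 = 4 / 5 := by
  unfold tpmGas
  rw [vOpt_T4, sum_eval]
  simp (config := { decide := true }) only [Finset.mem_insert, Finset.mem_singleton]
  norm_num [tTx7, Matrix.cons_val_two, Matrix.cons_val_three, Matrix.vecHead, Matrix.vecTail]

/-- The Shapley, Banzhaf and TPM GCMs do not satisfy Scheduling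
Monotonicity: there is a makespan function `v` satisfying (S1)–(S4) (the
optimal-scheduler makespan on at least 2 threads), a set `T = {tx1, tx2}` and
transactions `tx3, tx4 ∉ T` with `v(T∪{tx3}) = 3 < 4 = v(T∪{tx4})`, yet the
Shapley values are `1 > 5/6`, the Banzhaf values `1 > 3/4`, and the TPM values
`1 > 4/5`. -/
theorem shapley_banzhaf_tpm_not_scheduling_monotone :
    ∃ v : Finset (Fin 4) → ℝ,
      -- (S1) monotonicity in T
      (∀ A B : Finset (Fin 4), A ⊆ B → v A ≤ v B) ∧
      -- (S2) monotonicity under bundling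
      (∀ (T : Finset (Fin 4)) (a b c : Fin 4), a ∉ T → b ∉ T → c ∉ T → a ≠ b →
        tTx7 c = tTx7 a + tTx7 b → keysTx7 c = keysTx7 a ∪ keysTx7 b →
        v (insert a (insert b T)) ≤ v (insert c T)) ∧
      -- (S3) monotonicity in t and K
      (∀ (T : Finset (Fin 4)) (a b : Fin 4), a ∉ T → b ∉ T →
        tTx7 a ≤ tTx7 b → keysTx7 a ⊆ keysTx7 b →
        v (insert a T) ≤ v (insert b T)) ∧
      -- (S4) empty set
      v ∅ = 0 ∧
      -- makespans of the two augmented blocks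
      v (insert 2 ({0, 1} : Finset (Fin 4))) = 3 ∧
      v (insert 3 ({0, 1} : Finset (Fin 4))) = 4 ∧
      v (insert 2 ({0, 1} : Finset (Fin 4))) < v (insert 3 ({0, 1} : Finset (Fin 4))) ∧
      -- Shapley values
      shapleyGas v (insert 2 ({0, 1} : Finset (Fin 4))) 2 = 1 ∧
      shapleyGas v (insert 3 ({0, 1} : Finset (Fin 4))) 3 = 5 / 6 ∧
      shapleyGas v (insert 3 ({0, 1} : Finset (Fin 4))) 3
        < shapleyGas v (insert 2 ({0, 1} : Finset (Fin 4))) 2 ∧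
      -- Banzhaf values
      banzhafGas v (insert 2 ({0, 1} : Finset (Fin 4))) 2 = 1 ∧
      banzhafGas v (insert 3 ({0, 1} : Finset (Fin 4))) 3 = 3 / 4 ∧
      banzhafGas v (insert 3 ({0, 1} : Finset (Fin 4))) 3
        < banzhafGas v (insert 2 ({0, 1} : Finset (Fin 4))) 2 ∧
      -- TPM values
      tpmGas tTx7 v (insert 2 ({0, 1} : Finset (Fin 4))) 2 = 1 ∧
      tpmGas tTx7 v (insert 3 ({0, 1} : Finset (Fin 4))) 3 = 4 / 5 ∧
      tpmGas tTx7 v (insert 3 ({0, 1} : Finset (Fin 4))) 3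
        < tpmGas tTx7 v (insert 2 ({0, 1} : Finset (Fin 4))) 2 := by
  refine ⟨vOpt, fun A B h => vOpt_mono h, vOpt_S2, vOpt_S3, by simp [vOpt], vOpt_T3, vOpt_T4,
    by rw [vOpt_T3, vOpt_T4]; norm_num, shapley3, shapley4,
    by rw [shapley3, shapley4]; norm_num, banzhaf3, banzhaf4,
    by rw [banzhaf3, banzhaf4]; norm_num, tpm3, tpm4, by rw [tpm3, tpm4]; norm_num⟩
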